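/- Let H be a Hilbert space, I an open interval, (lᵗ) ⊆ H' and (bᵗ) an equicoercive family of continuous bilinear forms on H. Assume: the weak derivatives l̇ᵗ ∈ H' exist and t ↦ l̇ᵗ is norm-continuous; the weak derivatives ḃᵗ exist, the family (ḃᵗ) is equicontinuous, and t ↦ ḃᵗ is norm-continuous (in the bilinear form norm). Let uᵗ solve bᵗ(uᵗ,v)=lᵗ(v) for all v ∈ H, and let qᵗ be the unique solution of bᵗ(qᵗ,v) = l̇ᵗ(v) − ḃᵗ(uᵗ,v) for all v ∈ H. Then t ↦ uᵗ is differentiable with respect to the strong (norm) topology on H and its derivative equals qᵗ for every t ∈ I; moreover t ↦ qᵗ is strongly continuous. -/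

import Mathlib

open Metric Filter Topology ContinuousLinearMap

lemma aux_coer {H : Type*} [NormedAddCommGroup H] [NormedSpace ℝ H]
    {Λ : ℝ} (B : H →L[ℝ] H →L[ℝ] ℝ)
    (h : ∀ v : H, Λ * ‖v‖ ^ 2 ≤ B v v) (x : H) : Λ * ‖x‖ ≤ ‖B x‖ := by
  rcases eq_or_ne x 0 with rfl | hx
  · simp
  have hx' : 0 < ‖x‖ := norm_pos_iff.2 hx
  have h1 : Λ * ‖x‖ * ‖x‖ ≤ ‖B x‖ * ‖x‖ := by
    calc Λ * ‖x‖ * ‖x‖ = Λ * ‖x‖ ^ 2 := by ring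
      _ ≤ B x x := h x
      _ ≤ |B x x| := le_abs_self _
      _ = ‖B x x‖ := (Real.norm_eq_abs _).symm
      _ ≤ ‖B x‖ * ‖x‖ := (B x).le_opNorm x
  exact le_of_mul_le_mul_right h1 hx'

lemma aux_bil_norm {H : Type*} [NormedAddCommGroup H] [NormedSpace ℝ H]
    (T : H →L[ℝ] H →L[ℝ] ℝ) {M : ℝ} (hM : 0 ≤ M)
    (h : ∀ w v : H, |T w v| ≤ M * ‖w‖ * ‖v‖) : ‖T‖ ≤ M :=
  opNorm_le_bound T hM fun w => opNorm_le_bound _ (by positivity) fun v => by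
    simpa [Real.norm_eq_abs] using h w v

lemma aux_mvt {E : Type*} [NormedAddCommGroup E] [NormedSpace ℝ E] {f f' : ℝ → E} {s : Set ℝ}
    (hs : Convex ℝ s) (hf : ∀ x ∈ s, HasDerivAt f (f' x) x) {K : ℝ}
    (hb : ∀ x ∈ s, ‖f' x‖ ≤ K) {x y : ℝ} (hx : x ∈ s) (hy : y ∈ s) :
    ‖f y - f x‖ ≤ K * |y - x| := by
  have := hs.norm_image_sub_le_of_norm_hasDerivWithin_le
    (fun z hz => (hf z hz).hasDerivWithinAt) hb hx hy
  simpa [Real.norm_eq_abs] using this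

lemma aux_est {H : Type*} [NormedAddCommGroup H] [NormedSpace ℝ H]
    {I : Set ℝ} (hI : IsOpen I) {f fdot : ℝ → H →L[ℝ] ℝ}
    {t : ℝ} (ht : t ∈ I)
    (hderiv : ∀ s ∈ I, ∀ v : H, HasDerivAt (fun τ => f τ v) (fdot s v) s)
    (hcont : ContinuousWithinAt fdot I t)
    {ε : ℝ} (hε : 0 < ε) :
    ∃ δ > 0, Metric.ball t δ ⊆ I ∧
      ∀ s ∈ Metric.ball t δ, ‖f s - f t - (s - t) • fdot t‖ ≤ ε * |s - t| := by
  obtain ⟨δ₀, hδ₀, hball₀⟩ := Metric.isOpen_iff.1 hI t ht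
  rw [Metric.continuousWithinAt_iff] at hcont
  obtain ⟨δ₁, hδ₁, hnear⟩ := hcont ε hε
  have hsub : Metric.ball t (min δ₀ δ₁) ⊆ I :=
    (Metric.ball_subset_ball (min_le_left _ _)).trans hball₀
  refine ⟨min δ₀ δ₁, lt_min hδ₀ hδ₁, hsub, ?_⟩
  intro s hs
  refine ContinuousLinearMap.opNorm_le_bound _ (by positivity) fun v => ?_
  have key := aux_mvt (convex_ball t (min δ₀ δ₁))
    (f := fun τ => f τ v - τ * (fdot t v)) (f' := fun τ => fdot τ v - fdot t v)
    (fun τ hτ => (hderiv τ (hsub hτ) v).sub (hasDerivAt_mul_const _))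
    (K := ε * ‖v‖)
    (fun τ hτ => by
      have h1 : dist τ t < δ₁ := lt_of_lt_of_le (mem_ball.1 hτ) (min_le_right _ _)
      have h2 := hnear (hsub hτ) h1
      calc ‖fdot τ v - fdot t v‖ = ‖(fdot τ - fdot t) v‖ := by simp
        _ ≤ ‖fdot τ - fdot t‖ * ‖v‖ := le_opNorm _ _
        _ ≤ ε * ‖v‖ := by
            have : ‖fdot τ - fdot t‖ ≤ ε := by rw [← dist_eq_norm]; exact h2.le
            exact mul_le_mul_of_nonneg_right this (norm_nonneg v))
    (mem_ball_self (lt_min hδ₀ hδ₁)) hs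
  have heq : (f s v - s * fdot t v) - (f t v - t * fdot t v) = (f s - f t - (s - t) • fdot t) v := by
    simp only [ContinuousLinearMap.sub_apply, ContinuousLinearMap.smul_apply, smul_eq_mul]
    ring
  rw [heq] at key
  calc ‖(f s - f t - (s - t) • fdot t) v‖ ≤ ε * ‖v‖ * |s - t| := key
    _ = ε * |s - t| * ‖v‖ := by ring


set_option maxHeartbeats 1000000

/-- Differentiability of the solution map in the strong topology: for an equicoercive family
`(bᵗ)` of continuous bilinear forms on a Hilbert space with weak derivatives `ḃᵗ`
(equicontinuous, norm-continuous in `t`) and linear forms `lᵗ` with weak derivatives `l̇ᵗ`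
(norm-continuous in `t`), if `uᵗ` solves `bᵗ(uᵗ,v)=lᵗ(v)` and `qᵗ` solves
`bᵗ(qᵗ,v)=l̇ᵗ(v)−ḃᵗ(uᵗ,v)`, then `t ↦ uᵗ` is strongly continuous and strongly differentiable
with derivative `qᵗ`, and `t ↦ qᵗ` is strongly continuous. -/
theorem stmt_8 {H : Type*} [NormedAddCommGroup H] [InnerProductSpace ℝ H] [CompleteSpace H]
    (I : Set ℝ) (hI : IsOpen I)
    (b bdot : ℝ → H →L[ℝ] H →L[ℝ] ℝ) (l ldot : ℝ → H →L[ℝ] ℝ)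
    (u q : ℝ → H) (Λ C : ℝ) (hΛ : 0 < Λ)
    (hcoer : ∀ t ∈ I, ∀ v : H, Λ * ‖v‖ ^ 2 ≤ b t v v)
    (hlderiv : ∀ t ∈ I, ∀ v : H, HasDerivAt (fun τ => l τ v) (ldot t v) t)
    (hldotcont : ContinuousOn ldot I)
    (hbderiv : ∀ t ∈ I, ∀ w v : H, HasDerivAt (fun τ => b τ w v) (bdot t w v) t)
    (hequi : ∀ t ∈ I, ∀ w v : H, |bdot t w v| ≤ C * ‖w‖ * ‖v‖)
    (hbdotcont : ContinuousOn bdot I)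
    (hu : ∀ t ∈ I, ∀ v : H, b t (u t) v = l t v)
    (hq : ∀ t ∈ I, ∀ v : H, b t (q t) v = ldot t v - bdot t (u t) v) :
    ContinuousOn u I ∧ (∀ t ∈ I, HasDerivAt u (q t) t) ∧ ContinuousOn q I := by
  set C' : ℝ := max C 0 with hC'def
  have hC'0 : 0 ≤ C' := le_max_right _ _
  have hequi' : ∀ s ∈ I, ∀ w v : H, |bdot s w v| ≤ C' * ‖w‖ * ‖v‖ := by
    intro s hs w v
    refine (hequi s hs w v).trans ?_
    have h1 : C ≤ C' := le_max_left _ _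
    exact mul_le_mul_of_nonneg_right (mul_le_mul_of_nonneg_right h1 (norm_nonneg w))
      (norm_nonneg v)
  have hbdotnorm : ∀ s ∈ I, ‖bdot s‖ ≤ C' := fun s hs => aux_bil_norm _ hC'0 (hequi' s hs)
  -- Lipschitz bound for b on balls inside I
  have hblip : ∀ t ∈ I, ∀ δ : ℝ, 0 < δ → Metric.ball t δ ⊆ I →
      ∀ s ∈ Metric.ball t δ, ‖b s - b t‖ ≤ C' * |s - t| := by
    intro t ht δ hδ hball s hs
    refine aux_bil_norm _ (by positivity) fun w v => ?_
    have key := aux_mvt (convex_ball t δ)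
      (f := fun τ => b τ w v) (f' := fun τ => bdot τ w v)
      (fun τ hτ => hbderiv τ (hball hτ) w v)
      (K := C' * ‖w‖ * ‖v‖)
      (fun τ hτ => by simpa [Real.norm_eq_abs] using hequi' τ (hball hτ) w v)
      (mem_ball_self hδ) hs
    calc |(b s - b t) w v| = ‖b s w v - b t w v‖ := by simp [Real.norm_eq_abs]
      _ ≤ C' * ‖w‖ * ‖v‖ * |s - t| := key
      _ = C' * |s - t| * ‖w‖ * ‖v‖ := by ring
  -- the main differentiability claim
  have main : ∀ t ∈ I, HasDerivAt u (q t) t := by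
    intro t ht
    have hbu_deriv : ∀ s ∈ I, ∀ v : H,
        HasDerivAt (fun τ => b τ (u t) v) (bdot s (u t) v) s := fun s hs v => hbderiv s hs (u t) v
    have hbu_cont : ContinuousWithinAt (fun τ => bdot τ (u t)) I t :=
      (ContinuousLinearMap.apply ℝ (H →L[ℝ] ℝ) (u t)).continuous.continuousAt.comp_continuousWithinAt
        (hbdotcont t ht)
    -- Lipschitz bound for u near t
    obtain ⟨δ₁, hδ₁, hδ₁I, hl1⟩ := aux_est hI ht hlderiv (hldotcont t ht) one_pos
    set δ₂ : ℝ := min δ₁ (Λ / (2 * (C' + 1))) with hδ₂def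
    have hδ₂ : 0 < δ₂ := lt_min hδ₁ (by positivity)
    have hδ₂I : Metric.ball t δ₂ ⊆ I := (Metric.ball_subset_ball (min_le_left _ _)).trans hδ₁I
    set K : ℝ := (2 / Λ) * ((1 + ‖ldot t‖) + C' * ‖u t‖) with hKdef
    have hK0 : 0 ≤ K := by positivity
    have hId : ∀ s ∈ I, b t (u s - u t) = (l s - l t) + (b t - b s) (u s) := by
      intro s hs
      ext v
      simp only [map_sub, ContinuousLinearMap.sub_apply, ContinuousLinearMap.add_apply]
      have e1 := hu s hs v
      have e2 := hu t ht v
      linarith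
    have hulip : ∀ s ∈ Metric.ball t δ₂, ‖u s - u t‖ ≤ K * |s - t| := by
      intro s hs
      have hsI : s ∈ I := hδ₂I hs
      have h1 : Λ * ‖u s - u t‖ ≤ ‖b t (u s - u t)‖ := aux_coer (b t) (hcoer t ht) _
      have h2 : ‖b t (u s - u t)‖ ≤ ‖l s - l t‖ + ‖b t - b s‖ * ‖u s‖ := by
        rw [hId s hsI]
        exact (norm_add_le _ _).trans (by gcongr; exact le_opNorm _ _)
      have h3 : ‖b t - b s‖ ≤ C' * |s - t| := by
        have e : ‖b t - b s‖ = ‖b s - b t‖ := norm_sub_rev (E := H →L[ℝ] H →L[ℝ] ℝ) _ _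
        rw [e]; exact hblip t ht δ₂ hδ₂ hδ₂I s hs
      have h4 : ‖l s - l t‖ ≤ (1 + ‖ldot t‖) * |s - t| := by
        have k1 := hl1 s (Metric.ball_subset_ball (min_le_left _ _) hs)
        have k2 : ‖l s - l t‖ ≤ ‖l s - l t - (s - t) • ldot t‖ + ‖(s - t) • ldot t‖ := by
          have := norm_add_le (l s - l t - (s - t) • ldot t) ((s - t) • ldot t)
          simpa using this
        have e : ‖(s - t) • ldot t‖ = ‖(s - t : ℝ)‖ * ‖ldot t‖ :=
          norm_smul (α := ℝ) (β := H →L[ℝ] ℝ) _ _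
        rw [e, Real.norm_eq_abs] at k2
        nlinarith [abs_nonneg (s - t), norm_nonneg (ldot t)]
      have h6 : ‖u s‖ ≤ ‖u s - u t‖ + ‖u t‖ := by
        have := norm_add_le (u s - u t) (u t); simpa using this
      have h7 : C' * |s - t| ≤ Λ / 2 := by
        have hd : |s - t| ≤ Λ / (2 * (C' + 1)) := by
          have := mem_ball.1 hs
          rw [Real.dist_eq] at this
          exact this.le.trans (min_le_right _ _)
        calc C' * |s - t| ≤ C' * (Λ / (2 * (C' + 1))) :=
              mul_le_mul_of_nonneg_left hd hC'0
          _ ≤ Λ / 2 := by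
              rw [mul_div_assoc', div_le_div_iff₀ (by positivity) (by norm_num)]
              nlinarith [hΛ.le, hC'0]
      have h8 : ‖b t - b s‖ * ‖u s‖ ≤ (C' * |s - t|) * (‖u s - u t‖ + ‖u t‖) :=
        mul_le_mul h3 h6 (norm_nonneg _) (by positivity)
      have h9 : (C' * |s - t|) * ‖u s - u t‖ ≤ (Λ / 2) * ‖u s - u t‖ :=
        mul_le_mul_of_nonneg_right h7 (norm_nonneg _)
      have h10 : (Λ / 2) * ‖u s - u t‖ ≤ ((1 + ‖ldot t‖) + C' * ‖u t‖) * |s - t| := by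
        nlinarith [h1, h2, h4, h8, h9, abs_nonneg (s - t), hC'0]
      have h11 : (Λ / 2) * (K * |s - t|) = ((1 + ‖ldot t‖) + C' * ‖u t‖) * |s - t| := by
        rw [hKdef]; field_simp
      have := h10.trans_eq h11.symm
      exact le_of_mul_le_mul_left this (by positivity)
    -- now the derivative
    rw [hasDerivAt_iff_isLittleO, Asymptotics.isLittleO_iff]
    intro ε hε
    have hε₀ : 0 < Λ * ε / 3 := by positivity
    obtain ⟨δl, hδl, hδlI, hl⟩ := aux_est hI ht hlderiv (hldotcont t ht) hε₀
    obtain ⟨δb, hδb, hδbI, hb⟩ := aux_est hI ht hbu_deriv hbu_cont hε₀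
    set δ₃ : ℝ := (Λ * ε / 3) / (C' * K + 1) with hδ₃def
    have hδ₃ : 0 < δ₃ := by positivity
    set δ : ℝ := min (min δl δb) (min δ₂ δ₃) with hδdef
    have hδ : 0 < δ := lt_min (lt_min hδl hδb) (lt_min hδ₂ hδ₃)
    filter_upwards [Metric.ball_mem_nhds t hδ] with s hs
    have hδδ₂ : δ ≤ δ₂ := (min_le_right (δl ⊓ δb) (δ₂ ⊓ δ₃)).trans (min_le_left δ₂ δ₃)
    have hδδ₃ : δ ≤ δ₃ := (min_le_right (δl ⊓ δb) (δ₂ ⊓ δ₃)).trans (min_le_right δ₂ δ₃)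
    have hδδl : δ ≤ δl := (min_le_left (δl ⊓ δb) (δ₂ ⊓ δ₃)).trans (min_le_left δl δb)
    have hδδb : δ ≤ δb := (min_le_left (δl ⊓ δb) (δ₂ ⊓ δ₃)).trans (min_le_right δl δb)
    have hsI : s ∈ I := hδ₂I (Metric.ball_subset_ball hδδ₂ hs)
    have hId2 : b t (u s - u t - (s - t) • q t) =
        (l s - l t - (s - t) • ldot t) + (b t - b s) (u s - u t)
          - (b s (u t) - b t (u t) - (s - t) • (bdot t (u t))) := by
      ext v
      simp only [map_sub, map_smul, ContinuousLinearMap.sub_apply,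
        ContinuousLinearMap.add_apply, ContinuousLinearMap.smul_apply, smul_eq_mul]
      rw [hu s hsI v, hu t ht v, hq t ht v]
      ring
    have n1 : ‖l s - l t - (s - t) • ldot t‖ ≤ (Λ * ε / 3) * |s - t| :=
      hl s (Metric.ball_subset_ball hδδl hs)
    have n3 : ‖b s (u t) - b t (u t) - (s - t) • (bdot t (u t))‖ ≤ (Λ * ε / 3) * |s - t| :=
      hb s (Metric.ball_subset_ball hδδb hs)
    have hlips : ‖u s - u t‖ ≤ K * |s - t| :=
      hulip s (Metric.ball_subset_ball hδδ₂ hs)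
    have habs : |s - t| ≤ δ₃ := by
      have := mem_ball.1 hs
      rw [Real.dist_eq] at this
      exact this.le.trans hδδ₃
    have n2 : ‖(b t - b s) (u s - u t)‖ ≤ (Λ * ε / 3) * |s - t| := by
      have k1 : ‖(b t - b s) (u s - u t)‖ ≤ ‖b t - b s‖ * ‖u s - u t‖ := le_opNorm _ _
      have k2 : ‖b t - b s‖ ≤ C' * |s - t| := by
        have e : ‖b t - b s‖ = ‖b s - b t‖ := norm_sub_rev (E := H →L[ℝ] H →L[ℝ] ℝ) _ _
        rw [e]
        exact hblip t ht δ₂ hδ₂ hδ₂I s (Metric.ball_subset_ball hδδ₂ hs)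
      have k3 : ‖b t - b s‖ * ‖u s - u t‖ ≤ (C' * |s - t|) * (K * |s - t|) :=
        mul_le_mul k2 hlips (norm_nonneg _) (by positivity)
      have k4 : (C' * |s - t|) * (K * |s - t|) ≤ (Λ * ε / 3) * |s - t| := by
        have k5 : C' * K * δ₃ ≤ Λ * ε / 3 := by
          rw [hδ₃def, mul_div_assoc']
          rw [div_le_iff₀ (by positivity)]
          nlinarith [hC'0, hK0, hε₀]
        have k6 : C' * K * |s - t| ≤ C' * K * δ₃ :=
          mul_le_mul_of_nonneg_left habs (by positivity)
        calc (C' * |s - t|) * (K * |s - t|) = (C' * K * |s - t|) * |s - t| := by ring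
          _ ≤ (Λ * ε / 3) * |s - t| :=
            mul_le_mul_of_nonneg_right (k6.trans k5) (abs_nonneg _)
      linarith
    have hcoe : Λ * ‖u s - u t - (s - t) • q t‖ ≤ ‖b t (u s - u t - (s - t) • q t)‖ :=
      aux_coer (b t) (hcoer t ht) _
    have htri : ‖b t (u s - u t - (s - t) • q t)‖ ≤ Λ * ε * |s - t| := by
      rw [hId2]
      calc ‖(l s - l t - (s - t) • ldot t) + (b t - b s) (u s - u t)
          - (b s (u t) - b t (u t) - (s - t) • (bdot t (u t)))‖
          ≤ ‖(l s - l t - (s - t) • ldot t) + (b t - b s) (u s - u t)‖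
            + ‖b s (u t) - b t (u t) - (s - t) • (bdot t (u t))‖ := norm_sub_le _ _
        _ ≤ ‖l s - l t - (s - t) • ldot t‖ + ‖(b t - b s) (u s - u t)‖
            + ‖b s (u t) - b t (u t) - (s - t) • (bdot t (u t))‖ := by
              gcongr; exact norm_add_le _ _
        _ ≤ (Λ * ε / 3) * |s - t| + (Λ * ε / 3) * |s - t| + (Λ * ε / 3) * |s - t| := by
              gcongr
        _ = Λ * ε * |s - t| := by ring
    have : Λ * ‖u s - u t - (s - t) • q t‖ ≤ Λ * (ε * |s - t|) := by
      calc Λ * ‖u s - u t - (s - t) • q t‖ ≤ Λ * ε * |s - t| := hcoe.trans htri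
        _ = Λ * (ε * |s - t|) := by ring
    have hfin := le_of_mul_le_mul_left this hΛ
    simpa [Real.norm_eq_abs] using hfin
  refine ⟨fun t ht => (main t ht).continuousAt.continuousWithinAt, main, ?_⟩
  intro t ht
  obtain ⟨δ₀, hδ₀, hball₀⟩ := Metric.isOpen_iff.1 hI t ht
  have ucont : ContinuousWithinAt u I t := (main t ht).continuousAt.continuousWithinAt
  have hq_eq : ∀ s ∈ I, b t (q s - q t) =
      (ldot s - ldot t) - (bdot s - bdot t) (u s) - (bdot t) (u s - u t)
        + (b t - b s) (q s) := by
    intro s hs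
    ext v
    simp only [map_sub, ContinuousLinearMap.sub_apply, ContinuousLinearMap.add_apply]
    rw [hq s hs v, hq t ht v]
    ring
  set G : ℝ → ℝ := fun s =>
    (‖ldot s - ldot t‖ + ‖bdot s - bdot t‖ * ‖u s‖ + C' * ‖u s - u t‖
      + C' * ‖s - t‖ * ((‖ldot s‖ + C' * ‖u s‖) / Λ)) / Λ with hGdef
  have h1 : ContinuousWithinAt ldot I t := hldotcont t ht
  have h2 : ContinuousWithinAt bdot I t := hbdotcont t ht
  have hGcont : ContinuousWithinAt G I t := by
    have cA : ContinuousWithinAt (fun s => ‖ldot s - ldot t‖) I t :=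
      (h1.sub continuousWithinAt_const).norm
    have cB : ContinuousWithinAt (fun s => ‖bdot s - bdot t‖) I t :=
      by
        have h2' : Tendsto bdot (𝓝[I] t) (@nhds (H →L[ℝ] H →L[ℝ] ℝ)
            PseudoMetricSpace.toUniformSpace.toTopologicalSpace (bdot t)) := by exact h2
        have := h2'.dist (tendsto_const_nhds (x := bdot t))
        have e : ∀ s, dist (bdot s) (bdot t) = ‖bdot s - bdot t‖ :=
          fun s => dist_eq_norm (E := H →L[ℝ] H →L[ℝ] ℝ) _ _
        simp only [e] at this
        exact this
    have cU : ContinuousWithinAt (fun s => ‖u s‖) I t := ucont.norm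
    have cUd : ContinuousWithinAt (fun s => ‖u s - u t‖) I t :=
      (ucont.sub continuousWithinAt_const).norm
    have cT : ContinuousWithinAt (fun s : ℝ => ‖s - t‖) I t :=
      (continuousWithinAt_id.sub continuousWithinAt_const).norm
    have cL : ContinuousWithinAt (fun s => ‖ldot s‖) I t := h1.norm
    exact ((((cA.add (cB.mul cU)).add (continuousWithinAt_const.mul cUd)).add
      ((continuousWithinAt_const.mul cT).mul
        ((cL.add (continuousWithinAt_const.mul cU)).div_const Λ))).div_const Λ)
  have hG0 : Filter.Tendsto G (nhdsWithin t I) (nhds 0) := by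
    have hGt : G t = 0 := by
      simp [hGdef, sub_self, ContinuousLinearMap.opNorm_zero]
      have e : bdot t - bdot t = 0 := by ext; simp
      rw [e]
      exact Or.inl (Or.inl ContinuousLinearMap.opNorm_zero)
    have := hGcont
    rwa [ContinuousWithinAt, hGt] at this
  have hev : ∀ᶠ s in nhdsWithin t I, ‖q s - q t‖ ≤ G s := by
    filter_upwards [self_mem_nhdsWithin,
      mem_nhdsWithin_of_mem_nhds (Metric.ball_mem_nhds t hδ₀)] with s hsI hsb
    have c1 : Λ * ‖q s - q t‖ ≤ ‖b t (q s - q t)‖ := aux_coer (b t) (hcoer t ht) _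
    have c2 : ‖b t (q s - q t)‖ ≤ ‖ldot s - ldot t‖ + ‖bdot s - bdot t‖ * ‖u s‖
        + C' * ‖u s - u t‖ + (C' * ‖s - t‖) * ‖q s‖ := by
      rw [hq_eq s hsI]
      have e1 : ‖(bdot s - bdot t) (u s)‖ ≤ ‖bdot s - bdot t‖ * ‖u s‖ := le_opNorm _ _
      have e2 : ‖(bdot t) (u s - u t)‖ ≤ C' * ‖u s - u t‖ := by
        calc ‖(bdot t) (u s - u t)‖ ≤ ‖bdot t‖ * ‖u s - u t‖ := le_opNorm _ _
          _ ≤ C' * ‖u s - u t‖ := mul_le_mul_of_nonneg_right (hbdotnorm t ht) (norm_nonneg _)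
      have e3 : ‖(b t - b s) (q s)‖ ≤ (C' * ‖s - t‖) * ‖q s‖ := by
        have e : ‖b t - b s‖ = ‖b s - b t‖ := norm_sub_rev (E := H →L[ℝ] H →L[ℝ] ℝ) _ _
        calc ‖(b t - b s) (q s)‖ ≤ ‖b t - b s‖ * ‖q s‖ := le_opNorm _ _
          _ ≤ (C' * ‖s - t‖) * ‖q s‖ := by
              refine mul_le_mul_of_nonneg_right ?_ (norm_nonneg _)
              rw [e, Real.norm_eq_abs]
              exact hblip t ht δ₀ hδ₀ hball₀ s hsb
      calc ‖(ldot s - ldot t) - (bdot s - bdot t) (u s) - (bdot t) (u s - u t)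
            + (b t - b s) (q s)‖
          ≤ ‖(ldot s - ldot t) - (bdot s - bdot t) (u s) - (bdot t) (u s - u t)‖
            + ‖(b t - b s) (q s)‖ := norm_add_le _ _
        _ ≤ ‖(ldot s - ldot t) - (bdot s - bdot t) (u s)‖ + ‖(bdot t) (u s - u t)‖
            + ‖(b t - b s) (q s)‖ := by
              have := norm_sub_le ((ldot s - ldot t) - (bdot s - bdot t) (u s))
                ((bdot t) (u s - u t))
              linarith
        _ ≤ ‖ldot s - ldot t‖ + ‖(bdot s - bdot t) (u s)‖ + ‖(bdot t) (u s - u t)‖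
            + ‖(b t - b s) (q s)‖ := by
              have := norm_sub_le (ldot s - ldot t) ((bdot s - bdot t) (u s))
              linarith
        _ ≤ ‖ldot s - ldot t‖ + ‖bdot s - bdot t‖ * ‖u s‖ + C' * ‖u s - u t‖
            + (C' * ‖s - t‖) * ‖q s‖ := by linarith
    have c3 : Λ * ‖q s‖ ≤ ‖ldot s‖ + C' * ‖u s‖ := by
      have idq : b s (q s) = ldot s - bdot s (u s) := by
        ext v
        simp only [ContinuousLinearMap.sub_apply]
        exact hq s hsI v
      have hco := aux_coer (b s) (hcoer s hsI) (q s)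
      rw [idq] at hco
      refine hco.trans ?_
      calc ‖ldot s - bdot s (u s)‖ ≤ ‖ldot s‖ + ‖bdot s (u s)‖ := norm_sub_le _ _
        _ ≤ ‖ldot s‖ + C' * ‖u s‖ := by
            have k1 : ‖bdot s (u s)‖ ≤ ‖bdot s‖ * ‖u s‖ := le_opNorm _ _
            have k2 := mul_le_mul_of_nonneg_right (hbdotnorm s hsI) (norm_nonneg (u s))
            linarith
    have c4 : ‖q s‖ ≤ (‖ldot s‖ + C' * ‖u s‖) / Λ := by
      rw [le_div_iff₀ hΛ]
      linarith
    have c5 : (C' * ‖s - t‖) * ‖q s‖ ≤ (C' * ‖s - t‖) * ((‖ldot s‖ + C' * ‖u s‖) / Λ) :=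
      mul_le_mul_of_nonneg_left c4 (by positivity)
    show ‖q s - q t‖ ≤ (‖ldot s - ldot t‖ + ‖bdot s - bdot t‖ * ‖u s‖ + C' * ‖u s - u t‖
      + C' * ‖s - t‖ * ((‖ldot s‖ + C' * ‖u s‖) / Λ)) / Λ
    rw [le_div_iff₀ hΛ]
    nlinarith [c1, c2, c5]
  have hfin : Filter.Tendsto (fun s => ‖q s - q t‖) (nhdsWithin t I) (nhds 0) :=
    squeeze_zero' (Filter.Eventually.of_forall fun s => norm_nonneg _) hev hG0
  have : Filter.Tendsto q (nhdsWithin t I) (nhds (q t)) := by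
    rw [tendsto_iff_norm_sub_tendsto_zero]
    exact hfin
  exact this
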